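/- Let 1 ≤ j ≠ j' ≤ k. There exists an orthonormal basis C of S such that: (a) ζ_0 := (e_{δ_{j'}} − e_{δ_j})/√2 belongs to C; (b) if k ≥ 3, then ζ_2 := [(k−2)(e_{δ_j} + e_{δ_{j'}}) − 2 ∑_{t ≠ j, j'} e_{δ_t}] / √(2k(k−2)) also belongs to C; and (c) every element of C other than ζ_0 (and ζ_2 when k ≥ 3) is orthogonal to both e_{δ_j} and e_{δ_{j'}}. -/

import Mathlib

open scoped ComplexConjugate

set_option maxHeartbeats 1000000 in
theorem stmt_7 (k : ℕ) (hk : 2 ≤ k) (d : Fin k → ℕ) (hd : ∀ r, 2 ≤ d r)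
    (u : ℕ → EuclideanSpace ℂ (∀ r, Fin (d r)))
    (hu : ∀ n, u n = ∑ i ∈ Finset.univ.filter
        (fun i : ∀ r, Fin (d r) => ∑ r, (i r : ℕ) = n),
      EuclideanSpace.single i (1 : ℂ))
    (S : Submodule ℂ (EuclideanSpace ℂ (∀ r, Fin (d r))))
    (hS : S = (Submodule.span ℂ (u '' Set.Iic (∑ r, (d r - 1))))ᗮ)
    (δ : Fin k → ∀ r, Fin (d r))
    (hδ : ∀ t r, (δ t r : ℕ) = if r = t then 1 else 0)
    (j j' : Fin k) (hjj' : j ≠ j')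
    (ζ₀ : EuclideanSpace ℂ (∀ r, Fin (d r)))
    (hζ₀ : ζ₀ = (Real.sqrt 2 : ℂ)⁻¹ •
      (EuclideanSpace.single (δ j') (1 : ℂ) - EuclideanSpace.single (δ j) (1 : ℂ)))
    (ζ₂ : EuclideanSpace ℂ (∀ r, Fin (d r)))
    (hζ₂ : ζ₂ = (Real.sqrt (2 * (k : ℝ) * ((k : ℝ) - 2)) : ℂ)⁻¹ •
      (((k : ℂ) - 2) • (EuclideanSpace.single (δ j) (1 : ℂ)
          + EuclideanSpace.single (δ j') (1 : ℂ))
        - (2 : ℂ) • ∑ t ∈ Finset.univ.filter (fun t => t ≠ j ∧ t ≠ j'),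
            EuclideanSpace.single (δ t) (1 : ℂ))) :
    ∃ C : Set (EuclideanSpace ℂ (∀ r, Fin (d r))),
      Orthonormal ℂ ((↑) : C → EuclideanSpace ℂ (∀ r, Fin (d r))) ∧
      Submodule.span ℂ C = S ∧
      ζ₀ ∈ C ∧
      (3 ≤ k → ζ₂ ∈ C) ∧
      (∀ v ∈ C, v ≠ ζ₀ → ¬(3 ≤ k ∧ v = ζ₂) →
        (inner ℂ (EuclideanSpace.single (δ j) (1 : ℂ)) v : ℂ) = 0 ∧
        (inner ℂ (EuclideanSpace.single (δ j') (1 : ℂ)) v : ℂ) = 0) := by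
  classical
  have hk0 : (k : ℂ) ≠ 0 := Nat.cast_ne_zero.mpr (by omega)
  set x : ℝ := 2 * (k : ℝ) * ((k : ℝ) - 2) with hxdef
  have hkR : (2 : ℝ) ≤ (k : ℝ) := by exact_mod_cast hk
  have hx0 : 0 ≤ x := by nlinarith
  -- scalar facts
  have hcc : ((Real.sqrt 2 : ℂ)⁻¹) * ((Real.sqrt 2 : ℂ)⁻¹) = (2 : ℂ)⁻¹ := by
    rw [← mul_inv, ← Complex.ofReal_mul, Real.mul_self_sqrt (by norm_num)]
    norm_num
  have hsqx : (Real.sqrt x : ℂ) * (Real.sqrt x : ℂ) = (x : ℂ) := by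
    rw [← Complex.ofReal_mul, Real.mul_self_sqrt hx0]
  have hxC : (x : ℂ) = 2 * (k : ℂ) * ((k : ℂ) - 2) := by
    rw [hxdef]; push_cast; ring
  have hxpos : 3 ≤ k → 0 < x := by
    intro h3
    have : (3 : ℝ) ≤ (k : ℝ) := by exact_mod_cast h3
    rw [hxdef]; nlinarith
  have hsne : 3 ≤ k → ((Real.sqrt x : ℝ) : ℂ) ≠ 0 := by
    intro h3
    exact Complex.ofReal_ne_zero.mpr (ne_of_gt (Real.sqrt_pos.mpr (hxpos h3)))
  have hbc2 : 3 ≤ k → ((Real.sqrt x : ℂ) / (2 * (k : ℂ))) * ((Real.sqrt x : ℂ)⁻¹) = (2 * (k : ℂ))⁻¹ := by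
    intro h3
    field_simp [hsne h3]
  have hbc2' : ((Real.sqrt x : ℂ) / (2 * (k : ℂ))) * ((Real.sqrt x : ℂ)⁻¹) * ((k : ℂ) - 2) = ((k : ℂ) - 2) / (2 * (k : ℂ)) := by
    rcases lt_or_ge k 3 with h | h3
    · have hk2 : k = 2 := by omega
      have hz : ((k : ℂ) - 2) = 0 := by rw [hk2]; norm_num
      rw [hz]; ring
    · rw [hbc2 h3]; ring
  have hc2zero : ¬ 3 ≤ k → ((Real.sqrt x : ℂ)⁻¹) = 0 := by
    intro h3
    have hk2 : k = 2 := by omega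
    have : x = 0 := by rw [hxdef, hk2]; norm_num
    rw [this, Real.sqrt_zero, Complex.ofReal_zero, inv_zero]
  -- delta facts
  have hδsum : ∀ t, ∑ r, ((δ t) r : ℕ) = 1 := by
    intro t; simp [hδ]
  have hδinj : Function.Injective δ := by
    intro t t' h
    by_contra hne
    have h1 : ((δ t t : ℕ)) = ((δ t' t : ℕ)) := by rw [h]
    rw [hδ t t, hδ t' t, if_pos rfl, if_neg hne] at h1
    exact one_ne_zero h1
  have hsum_one : ∀ i : ∀ r, Fin (d r), (∑ r, (i r : ℕ)) = 1 → ∃ t, i = δ t := by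
    intro i hi
    obtain ⟨t, -, ht⟩ := Finset.exists_ne_zero_of_sum_ne_zero
      (by rw [hi]; exact one_ne_zero : ∑ r, (i r : ℕ) ≠ 0)
    have hsplit : (i t : ℕ) + ∑ r ∈ Finset.univ.erase t, (i r : ℕ) = 1 := by
      rw [← hi]; exact Finset.add_sum_erase Finset.univ (fun r => (i r : ℕ)) (Finset.mem_univ t)
    have hit : (i t : ℕ) = 1 := by omega
    have hrest : ∑ r ∈ Finset.univ.erase t, (i r : ℕ) = 0 := by omega
    refine ⟨t, funext fun r => Fin.ext ?_⟩
    rw [hδ]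
    by_cases hr : r = t
    · subst hr; simp [hit]
    · have := (Finset.sum_eq_zero_iff.mp hrest) r (by simp [hr])
      simp [hr, this]
  -- inner product base facts
  have hsingle : ∀ (i : ∀ r, Fin (d r)) t,
      (inner ℂ (EuclideanSpace.single i (1 : ℂ)) (EuclideanSpace.single (δ t) (1 : ℂ)) : ℂ)
        = if i = δ t then 1 else 0 := by
    intro i t
    rw [EuclideanSpace.inner_single_left]
    simp [EuclideanSpace.single_apply, eq_comm]
  have hEE : ∀ t t',
      (inner ℂ (EuclideanSpace.single (δ t) (1 : ℂ)) (EuclideanSpace.single (δ t') (1 : ℂ)) : ℂ)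
        = if t = t' then 1 else 0 := by
    intro t t'
    rw [hsingle]
    simp [hδinj.eq_iff]
  have hext : ∀ y z : EuclideanSpace ℂ (∀ r, Fin (d r)),
      (∀ i, (inner ℂ (EuclideanSpace.single i (1 : ℂ)) y : ℂ)
        = (inner ℂ (EuclideanSpace.single i (1 : ℂ)) z : ℂ)) → y = z := by
    intro y z h
    ext i
    have := h i
    simpa [EuclideanSpace.inner_single_left] using this
  have hu1 : u 1 = ∑ t, EuclideanSpace.single (δ t) (1 : ℂ) := by
    rw [hu]
    have hset : Finset.univ.filter (fun i : ∀ r, Fin (d r) => ∑ r, (i r : ℕ) = 1)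
        = Finset.image δ Finset.univ := by
      ext i
      simp only [Finset.mem_filter, Finset.mem_univ, true_and, Finset.mem_image]
      constructor
      · intro h; exact (hsum_one i h).imp fun t ht => ht.symm
      · rintro ⟨t, rfl⟩; exact hδsum t
    rw [hset, Finset.sum_image (fun a _ b2 _ h => hδinj h)]
  -- the filter over Fin k
  have hjF : j ∉ Finset.univ.filter (fun t => t ≠ j ∧ t ≠ j') := by simp
  have hj'F : j' ∉ Finset.univ.filter (fun t => t ≠ j ∧ t ≠ j') := by simp
  have hcardF : (Finset.univ.filter (fun t => t ≠ j ∧ t ≠ j')).card = k - 2 := by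
    have hFeq : Finset.univ.filter (fun t => t ≠ j ∧ t ≠ j')
        = (Finset.univ \ {j, j'} : Finset (Fin k)) := by
      ext t; simp [not_or]
    rw [hFeq, Finset.card_sdiff_of_subset (by simp), Finset.card_pair hjj']
    simp
  have hcardFC : ((Finset.univ.filter (fun t => t ≠ j ∧ t ≠ j')).card : ℂ) = (k : ℂ) - 2 := by
    rw [hcardF]
    push_cast [Nat.cast_sub hk]
    ring
  -- membership in S
  have memS : ∀ z : EuclideanSpace ℂ (∀ r, Fin (d r)), (∀ n, (inner ℂ (u n) z : ℂ) = 0) → z ∈ S := by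
    intro z hz
    rw [hS, Submodule.mem_orthogonal]
    intro w hw
    induction hw using Submodule.span_induction with
    | mem w hw => obtain ⟨n, -, rfl⟩ := hw; exact hz n
    | zero => simp
    | add w₁ w₂ h₁ h₂ ih₁ ih₂ => rw [inner_add_left, ih₁, ih₂, add_zero]
    | smul a w hw ih => rw [inner_smul_left, ih, mul_zero]
  have hinner_u_single : ∀ n t,
      (inner ℂ (u n) (EuclideanSpace.single (δ t) (1 : ℂ)) : ℂ) = if n = 1 then 1 else 0 := by
    intro n t
    rw [hu n, sum_inner]
    simp only [EuclideanSpace.inner_single_left, map_one, one_mul,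
      EuclideanSpace.single_apply]
    rw [Finset.sum_ite_eq' _ (δ t) (fun _ => (1 : ℂ))]
    simp [Finset.mem_filter, hδsum, eq_comm]
  have hζ₀S : ζ₀ ∈ S := by
    apply memS
    intro n
    rw [hζ₀, inner_smul_right, inner_sub_right, hinner_u_single, hinner_u_single, sub_self,
      mul_zero]
  have hζ₂S : ζ₂ ∈ S := by
    apply memS
    intro n
    rw [hζ₂, inner_smul_right, inner_sub_right, inner_smul_right, inner_add_right,
      hinner_u_single, hinner_u_single, inner_smul_right, inner_sum]
    simp only [hinner_u_single]
    rw [Finset.sum_const, nsmul_eq_mul, hcardFC]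
    split_ifs with h
    · ring
    · ring
  -- conjugation facts
  have hconjc : conj ((Real.sqrt 2 : ℂ)⁻¹) = ((Real.sqrt 2 : ℂ)⁻¹) := by simp
  have hconjc₂ : conj ((Real.sqrt x : ℂ)⁻¹) = ((Real.sqrt x : ℂ)⁻¹) := by simp
  -- key identities
  have key_j : EuclideanSpace.single (δ j) (1 : ℂ)
      = (k : ℂ)⁻¹ • u 1 + (-((Real.sqrt 2 : ℂ)⁻¹)) • ζ₀ + ((Real.sqrt x : ℂ) / (2 * (k : ℂ))) • ζ₂ := by
    refine hext _ _ fun i => ?_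
    rw [hu1, hζ₀, hζ₂]
    simp only [inner_add_right, inner_sub_right, inner_smul_right, inner_sum, hsingle]
    by_cases hex : ∃ t, i = δ t
    · obtain ⟨t, rfl⟩ := hex
      simp only [hδinj.eq_iff]
      rw [Finset.sum_ite_eq Finset.univ t (fun _ => (1 : ℂ)),
        Finset.sum_ite_eq _ t (fun _ => (1 : ℂ))]
      simp only [Finset.mem_univ, if_true, Finset.mem_filter, true_and]
      rcases eq_or_ne t j with rfl | htj
      · simp [hjj']
        have h1 : (1 : ℂ) = (k : ℂ)⁻¹ + ((Real.sqrt 2 : ℂ)⁻¹) * ((Real.sqrt 2 : ℂ)⁻¹) + ((Real.sqrt x : ℂ) / (2 * (k : ℂ))) * ((Real.sqrt x : ℂ)⁻¹) * ((k : ℂ) - 2) := by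
          rw [hcc, hbc2']
          field_simp
          ring
        linear_combination h1
      · rcases eq_or_ne t j' with rfl | htj'
        · simp [htj]
          have h1 : (0 : ℂ) = (k : ℂ)⁻¹ - ((Real.sqrt 2 : ℂ)⁻¹) * ((Real.sqrt 2 : ℂ)⁻¹) + ((Real.sqrt x : ℂ) / (2 * (k : ℂ))) * ((Real.sqrt x : ℂ)⁻¹) * ((k : ℂ) - 2) := by
            rw [hcc, hbc2']
            field_simp
            ring
          linear_combination h1
        · have h3 : 3 ≤ k := by
            have hcard : ({t, j, j'} : Finset (Fin k)).card = 3 := by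
              rw [Finset.card_insert_of_notMem (by simp [htj, htj']),
                Finset.card_pair hjj']
            calc 3 = ({t, j, j'} : Finset (Fin k)).card := hcard.symm
              _ ≤ (Finset.univ : Finset (Fin k)).card := Finset.card_le_univ _
              _ = k := by simp
          simp [htj, htj']
          have h1 : (0 : ℂ) = (k : ℂ)⁻¹ - 2 * (((Real.sqrt x : ℂ) / (2 * (k : ℂ))) * ((Real.sqrt x : ℂ)⁻¹)) := by
            rw [hbc2 h3]
            field_simp
            ring
          linear_combination h1
    · push_neg at hex
      rw [if_neg (hex j), if_neg (hex j'),
        Finset.sum_eq_zero (fun t _ => if_neg (hex t)),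
        Finset.sum_eq_zero (fun t _ => if_neg (hex t))]
      simp
  have key_j' : EuclideanSpace.single (δ j') (1 : ℂ)
      = (k : ℂ)⁻¹ • u 1 + ((Real.sqrt 2 : ℂ)⁻¹) • ζ₀ + ((Real.sqrt x : ℂ) / (2 * (k : ℂ))) • ζ₂ := by
    refine hext _ _ fun i => ?_
    rw [hu1, hζ₀, hζ₂]
    simp only [inner_add_right, inner_sub_right, inner_smul_right, inner_sum, hsingle]
    by_cases hex : ∃ t, i = δ t
    · obtain ⟨t, rfl⟩ := hex
      simp only [hδinj.eq_iff]
      rw [Finset.sum_ite_eq Finset.univ t (fun _ => (1 : ℂ)),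
        Finset.sum_ite_eq _ t (fun _ => (1 : ℂ))]
      simp only [Finset.mem_univ, if_true, Finset.mem_filter, true_and]
      rcases eq_or_ne t j with rfl | htj
      · simp [hjj']
        have h1 : (0 : ℂ) = (k : ℂ)⁻¹ - ((Real.sqrt 2 : ℂ)⁻¹) * ((Real.sqrt 2 : ℂ)⁻¹) + ((Real.sqrt x : ℂ) / (2 * (k : ℂ))) * ((Real.sqrt x : ℂ)⁻¹) * ((k : ℂ) - 2) := by
          rw [hcc, hbc2']
          field_simp
          ring
        linear_combination h1
      · rcases eq_or_ne t j' with rfl | htj'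
        · simp [htj]
          have h1 : (1 : ℂ) = (k : ℂ)⁻¹ + ((Real.sqrt 2 : ℂ)⁻¹) * ((Real.sqrt 2 : ℂ)⁻¹) + ((Real.sqrt x : ℂ) / (2 * (k : ℂ))) * ((Real.sqrt x : ℂ)⁻¹) * ((k : ℂ) - 2) := by
            rw [hcc, hbc2']
            field_simp
            ring
          linear_combination h1
        · have h3 : 3 ≤ k := by
            have hcard : ({t, j, j'} : Finset (Fin k)).card = 3 := by
              rw [Finset.card_insert_of_notMem (by simp [htj, htj']),
                Finset.card_pair hjj']
            calc 3 = ({t, j, j'} : Finset (Fin k)).card := hcard.symm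
              _ ≤ (Finset.univ : Finset (Fin k)).card := Finset.card_le_univ _
              _ = k := by simp
          simp [htj, htj']
          have h1 : (0 : ℂ) = (k : ℂ)⁻¹ - 2 * (((Real.sqrt x : ℂ) / (2 * (k : ℂ))) * ((Real.sqrt x : ℂ)⁻¹)) := by
            rw [hbc2 h3]
            field_simp
            ring
          linear_combination h1
    · push_neg at hex
      rw [if_neg (hex j'), if_neg (hex j),
        Finset.sum_eq_zero (fun t _ => if_neg (hex t)),
        Finset.sum_eq_zero (fun t _ => if_neg (hex t))]
      simp
  -- inner products among ζ₀, ζ₂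
  have hζ₀ζ₀ : (inner ℂ ζ₀ ζ₀ : ℂ) = 1 := by
    rw [hζ₀]
    simp only [inner_smul_left, inner_smul_right, inner_sub_left, inner_sub_right, hEE]
    simp [hjj', Ne.symm hjj']
    linear_combination 2 * hcc
  have hE2 : ∀ s : Fin k, s = j ∨ s = j' →
      (inner ℂ (EuclideanSpace.single (δ s) (1 : ℂ)) ζ₂ : ℂ)
        = ((Real.sqrt x : ℂ)⁻¹) * ((k : ℂ) - 2) := by
    intro s hs
    rw [hζ₂, inner_smul_right, inner_sub_right, inner_smul_right, inner_add_right,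
      hEE, hEE, inner_smul_right, inner_sum]
    simp only [hEE]
    rw [Finset.sum_ite_eq _ s (fun _ => (1 : ℂ))]
    rcases hs with rfl | rfl
    · simp [hjj']
    · simp [Ne.symm hjj']
  have hE2F : ∀ s : Fin k, s ≠ j → s ≠ j' →
      (inner ℂ (EuclideanSpace.single (δ s) (1 : ℂ)) ζ₂ : ℂ)
        = ((Real.sqrt x : ℂ)⁻¹) * (-2) := by
    intro s h1 h2
    rw [hζ₂, inner_smul_right, inner_sub_right, inner_smul_right, inner_add_right,
      hEE, hEE, inner_smul_right, inner_sum]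
    simp only [hEE]
    rw [Finset.sum_ite_eq _ s (fun _ => (1 : ℂ))]
    simp [h1, h2]
  have hζ₀ζ₂ : (inner ℂ ζ₀ ζ₂ : ℂ) = 0 := by
    rw [hζ₀, inner_smul_left, inner_sub_left, hE2 j (Or.inl rfl), hE2 j' (Or.inr rfl),
      sub_self, mul_zero]
  have hζ₂ζ₂ : 3 ≤ k → (inner ℂ ζ₂ ζ₂ : ℂ) = 1 := by
    intro h3
    have hxne : (x : ℂ) ≠ 0 := by
      exact_mod_cast Complex.ofReal_ne_zero.mpr (ne_of_gt (hxpos h3))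
    have hc2x : ((Real.sqrt x : ℂ)⁻¹) * ((Real.sqrt x : ℂ)⁻¹) * (x : ℂ) = 1 := by
      rw [← mul_inv, hsqx, inv_mul_cancel₀ hxne]
    nth_rewrite 1 [hζ₂]
    rw [inner_smul_left, inner_sub_left, inner_smul_left, inner_add_left,
      hE2 j (Or.inl rfl), hE2 j' (Or.inr rfl), inner_smul_left, sum_inner]
    rw [Finset.sum_congr rfl (fun t ht => hE2F t (Finset.mem_filter.mp ht).2.1
      (Finset.mem_filter.mp ht).2.2)]
    rw [Finset.sum_const, nsmul_eq_mul, hcardFC]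
    simp only [map_sub, Complex.conj_natCast, map_ofNat, map_inv₀, Complex.conj_ofReal]
    linear_combination hc2x - ((Real.sqrt x : ℂ)⁻¹) * ((Real.sqrt x : ℂ)⁻¹) * hxC
  have hζ₂zero : ¬ 3 ≤ k → ζ₂ = 0 := by
    intro h3
    rw [hζ₂, hc2zero h3, zero_smul]
  -- the subspaces
  set W : Submodule ℂ (EuclideanSpace ℂ (∀ r, Fin (d r))) :=
    Submodule.span ℂ {ζ₀, ζ₂} with hWdef
  have hζ₀W : ζ₀ ∈ W := Submodule.subset_span (by simp)
  have hζ₂W : ζ₂ ∈ W := Submodule.subset_span (by simp)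
  have hWS : W ≤ S := by
    rw [hWdef, Submodule.span_le]
    intro y hy
    simp only [Set.mem_insert_iff, Set.mem_singleton_iff] at hy
    rcases hy with rfl | rfl
    exacts [hζ₀S, hζ₂S]
  set S' : Submodule ℂ (EuclideanSpace ℂ (∀ r, Fin (d r))) := Wᗮ ⊓ S with hS'def
  set B := stdOrthonormalBasis ℂ S' with hBdef
  have hBinj : Function.Injective ⇑B := by
    rw [← B.coe_toBasis]; exact B.toBasis.injective
  set Z : Set (EuclideanSpace ℂ (∀ r, Fin (d r))) :=
    insert ζ₀ (if 3 ≤ k then {ζ₂} else ∅) with hZdef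
  set R : Set (EuclideanSpace ℂ (∀ r, Fin (d r))) := Subtype.val '' Set.range ⇑B with hRdef
  have classify : ∀ y ∈ Z ∪ R, y = ζ₀ ∨ (3 ≤ k ∧ y = ζ₂) ∨ y ∈ R := by
    intro y hy
    rcases hy with hZ | hR
    · rcases Set.mem_insert_iff.mp hZ with rfl | h2
      · exact Or.inl rfl
      · by_cases h3 : 3 ≤ k
        · rw [if_pos h3] at h2
          exact Or.inr (Or.inl ⟨h3, h2⟩)
        · rw [if_neg h3] at h2
          exact absurd h2 (Set.notMem_empty y)
    · exact Or.inr (Or.inr hR)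
  have hRmem : ∀ y ∈ R, y ∈ Wᗮ ∧ y ∈ S := by
    rintro y ⟨p, -, rfl⟩
    exact Submodule.mem_inf.mp p.2
  have cross : ∀ y z : EuclideanSpace ℂ (∀ r, Fin (d r)), y ∈ W →
      (inner ℂ y y : ℂ) = 1 → z ∈ Wᗮ → (inner ℂ y z : ℂ) = 0 ∧ y ≠ z := by
    intro y z hyW hyy hzW
    have h0 : (inner ℂ y z : ℂ) = 0 := (Submodule.mem_orthogonal W z).mp hzW y hyW
    refine ⟨h0, ?_⟩
    rintro rfl
    rw [hyy] at h0
    exact one_ne_zero h0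
  have hne02 : 3 ≤ k → ζ₀ ≠ ζ₂ := by
    intro h3 h
    have h2 := hζ₀ζ₂
    rw [← h, hζ₀ζ₀] at h2
    exact one_ne_zero h2
  -- the candidate set
  refine ⟨Z ∪ R, ?_, ?_, ?_, ?_, ?_⟩
  · -- orthonormality
    rw [orthonormal_subtype_iff_ite]
    intro v hv w hw
    rcases classify v hv with hveq | ⟨h3, hveq⟩ | hvR
    · subst hveq
      rcases classify w hw with hweq | ⟨h3', hweq⟩ | hwR
      · subst hweq; rw [if_pos rfl]; exact hζ₀ζ₀
      · subst hweq; rw [if_neg (hne02 h3')]; exact hζ₀ζ₂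
      · obtain ⟨h0, hne⟩ := cross v w hζ₀W hζ₀ζ₀ (hRmem w hwR).1
        rw [if_neg hne]; exact h0
    · subst hveq
      rcases classify w hw with hweq | ⟨h3', hweq⟩ | hwR
      · subst hweq
        rw [if_neg (Ne.symm (hne02 h3))]
        exact inner_eq_zero_symm.mp hζ₀ζ₂
      · subst hweq; rw [if_pos rfl]; exact hζ₂ζ₂ h3
      · obtain ⟨h0, hne⟩ := cross v w hζ₂W (hζ₂ζ₂ h3) (hRmem w hwR).1
        rw [if_neg hne]; exact h0
    · rcases classify w hw with hweq | ⟨h3', hweq⟩ | hwR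
      · subst hweq
        obtain ⟨h0, hne⟩ := cross w v hζ₀W hζ₀ζ₀ (hRmem v hvR).1
        rw [if_neg (Ne.symm hne)]
        exact inner_eq_zero_symm.mp h0
      · subst hweq
        obtain ⟨h0, hne⟩ := cross w v hζ₂W (hζ₂ζ₂ h3') (hRmem v hvR).1
        rw [if_neg (Ne.symm hne)]
        exact inner_eq_zero_symm.mp h0
      · obtain ⟨p, ⟨a, rfl⟩, rfl⟩ := hvR
        obtain ⟨q, ⟨a', rfl⟩, rfl⟩ := hwR
        rw [← Submodule.coe_inner]
        rw [orthonormal_iff_ite.mp B.orthonormal a a']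
        by_cases h : a = a'
        · subst h; simp
        · rw [if_neg h, if_neg (fun hh => h (hBinj (Subtype.val_injective hh)))]
  · -- span
    rw [Submodule.span_union]
    have hspanZ : Submodule.span ℂ Z = W := by
      rw [hZdef, hWdef]
      by_cases h3 : 3 ≤ k
      · rw [if_pos h3]
      · rw [if_neg h3]
        have h0 : ζ₂ = 0 := hζ₂zero h3
        rw [h0, Set.pair_comm ζ₀ (0 : EuclideanSpace ℂ (∀ r, Fin (d r))),
          Submodule.span_insert_zero]
        simp
    have hspanR : Submodule.span ℂ R = S' := by
      have h1 : Submodule.span ℂ (Set.range ⇑B) = (⊤ : Submodule ℂ S') := by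
        have hsp := B.toBasis.span_eq
        rwa [B.coe_toBasis] at hsp
      have h2 : R = S'.subtype '' Set.range ⇑B := by
        rw [hRdef]; rfl
      rw [h2, ← Submodule.map_span, h1, Submodule.map_subtype_top]
    rw [hspanZ, hspanR, hS'def]
    exact Submodule.sup_orthogonal_inf_of_hasOrthogonalProjection hWS
  · exact Or.inl (Set.mem_insert _ _)
  · intro h3
    exact Or.inl (Set.mem_insert_iff.mpr (Or.inr (by rw [if_pos h3]; rfl)))
  · -- remaining vectors are orthogonal to the two singles
    intro v hv hv0 hv2
    have hvR : v ∈ R := by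
      rcases classify v hv with rfl | h2 | hR
      · exact absurd rfl hv0
      · exact absurd h2 hv2
      · exact hR
    obtain ⟨hvW, hvS⟩ := hRmem v hvR
    have hu1v : (inner ℂ (u 1) v : ℂ) = 0 := by
      rw [hS] at hvS
      refine (Submodule.mem_orthogonal _ v).mp hvS (u 1) (Submodule.subset_span ?_)
      have hN1 : 1 ≤ ∑ r, (d r - 1) := by
        calc 1 ≤ k := by omega
          _ = ∑ _r : Fin k, 1 := by simp
          _ ≤ ∑ r, (d r - 1) := Finset.sum_le_sum (fun r _ => by have := hd r; omega)
      exact ⟨1, hN1, rfl⟩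
    have hζ₀v : (inner ℂ ζ₀ v : ℂ) = 0 := (Submodule.mem_orthogonal W v).mp hvW ζ₀ hζ₀W
    have hζ₂v : (inner ℂ ζ₂ v : ℂ) = 0 := (Submodule.mem_orthogonal W v).mp hvW ζ₂ hζ₂W
    constructor
    · rw [key_j, inner_add_left, inner_add_left, inner_smul_left, inner_smul_left,
        inner_smul_left, hu1v, hζ₀v, hζ₂v]
      simp
    · rw [key_j', inner_add_left, inner_add_left, inner_smul_left, inner_smul_left,
        inner_smul_left, hu1v, hζ₀v, hζ₂v]
      simp
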